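/- Let μ and ν be probability measures on a measurable space (Ω, 𝔉), and let C ≥ 0 be a real number. Then the relative entropy satisfies Ent(ν|μ) ≤ C if and only if for every measurable function f : Ω → ℝ that is bounded above and bounded below by a positive constant (i.e. there exist 0 < δ ≤ K with δ ≤ f ≤ K), one has ∫ log f dν ≤ log( ∫ f dμ ) + C. -/

import Mathlib

open MeasureTheory
open scoped ENNReal Classical

/-- The relative entropy (Kullback–Leibler divergence) `Ent(ν|μ) ∈ [0,∞]`, defined as
`∫ log (dν/dμ) dν` when `ν ≪ μ` and this integral exists (in the sense of Bochner
integrability), and `+∞` otherwise. -/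
noncomputable def relEnt {Ω : Type*} [MeasurableSpace Ω] (ν μ : Measure Ω) : ℝ≥0∞ :=
  if ν ≪ μ ∧ Integrable (fun ω => Real.log (ν.rnDeriv μ ω).toReal) ν
  then ENNReal.ofReal (∫ ω, Real.log (ν.rnDeriv μ ω).toReal ∂ν)
  else ⊤

open Filter Topology

section Aux
variable {Ω : Type*} [MeasurableSpace Ω] {μ ν : Measure Ω}
  [IsProbabilityMeasure μ] [IsProbabilityMeasure ν]

/-- bounded measurable functions are integrable wrt a probability measure -/
lemma aux_integrable_of_bdd {f : Ω → ℝ} (hf : Measurable f) {K : ℝ}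
    (hK : ∀ ω, |f ω| ≤ K) : Integrable f μ :=
  (integrable_const K).mono' hf.aestronglyMeasurable
    (Filter.Eventually.of_forall fun ω => by simpa [Real.norm_eq_abs] using hK ω)

/-- if `g` is nonneg measurable and `∫⁻ ofReal g ≤ ofReal c` then `g` integrable with
integral `≤ c`. -/
lemma aux_integrable_and_le {g : Ω → ℝ} (hg : Measurable g) (hg0 : ∀ ω, 0 ≤ g ω)
    {c : ℝ} (hc : 0 ≤ c) (hbd : ∫⁻ ω, ENNReal.ofReal (g ω) ∂ν ≤ ENNReal.ofReal c) :
    Integrable g ν ∧ ∫ ω, g ω ∂ν ≤ c := by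
  have hint : Integrable g ν := by
    refine ⟨hg.aestronglyMeasurable, ?_⟩
    rw [hasFiniteIntegral_iff_ofReal (Filter.Eventually.of_forall hg0)]
    exact lt_of_le_of_lt hbd ENNReal.ofReal_lt_top
  refine ⟨hint, ?_⟩
  rw [integral_eq_lintegral_of_nonneg_ae (Filter.Eventually.of_forall hg0)
    hg.aestronglyMeasurable]
  calc (∫⁻ ω, ENNReal.ofReal (g ω) ∂ν).toReal ≤ (ENNReal.ofReal c).toReal :=
        ENNReal.toReal_mono ENNReal.ofReal_ne_top hbd
    _ = c := ENNReal.toReal_ofReal hc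

end Aux

section Fwd
variable {Ω : Type*} [MeasurableSpace Ω] {μ ν : Measure Ω}
  [IsProbabilityMeasure μ] [IsProbabilityMeasure ν]

lemma aux_forward (hac : ν ≪ μ)
    (hint : Integrable (fun ω => Real.log (ν.rnDeriv μ ω).toReal) ν)
    {C : ℝ} (hEnt : ∫ ω, Real.log (ν.rnDeriv μ ω).toReal ∂ν ≤ C)
    (f : Ω → ℝ) (hf : Measurable f)
    (hb : ∃ δ K : ℝ, 0 < δ ∧ δ ≤ K ∧ ∀ ω, δ ≤ f ω ∧ f ω ≤ K) :
    ∫ ω, Real.log (f ω) ∂ν ≤ Real.log (∫ ω, f ω ∂μ) + C := by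
  obtain ⟨δ, K, hδ, hδK, hbd⟩ := hb
  set R : Ω → ℝ := fun ω => (ν.rnDeriv μ ω).toReal with hR
  -- f is integrable
  have hfabs : ∀ ω, |f ω| ≤ K := fun ω =>
    abs_le.mpr ⟨le_trans (by linarith) (hbd ω).1, (hbd ω).2⟩
  have hfInt : Integrable f μ := aux_integrable_of_bdd hf hfabs
  set m : ℝ := ∫ ω, f ω ∂μ with hm
  have hδm : δ ≤ m := by
    have := integral_mono (integrable_const δ) hfInt (fun ω => (hbd ω).1)
    simpa using this
  have hm0 : 0 < m := lt_of_lt_of_le hδ hδm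
  -- the auxiliary function g
  set g : Ω → ℝ := fun ω => f ω / (R ω * m) with hg
  have hRmeas : Measurable R := (Measure.measurable_rnDeriv ν μ).ennreal_toReal
  have hgmeas : Measurable g := hf.div ((hRmeas.mul measurable_const))
  have hg0 : ∀ ω, 0 ≤ g ω := fun ω =>
    div_nonneg (le_trans hδ.le (hbd ω).1) (mul_nonneg ENNReal.toReal_nonneg hm0.le)
  -- lintegral bound for g
  have hlint : ∫⁻ ω, ENNReal.ofReal (g ω) ∂ν ≤ ENNReal.ofReal 1 := by
    have hch := MeasureTheory.lintegral_rnDeriv_mul hac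
      (f := fun ω => ENNReal.ofReal (g ω))
      (ENNReal.measurable_ofReal.comp hgmeas).aemeasurable
    rw [← hch]
    have hptwise : ∀ᵐ ω ∂μ,
        ν.rnDeriv μ ω * ENNReal.ofReal (g ω) ≤ ENNReal.ofReal (f ω / m) := by
      filter_upwards [Measure.rnDeriv_lt_top ν μ] with ω hlt
      rcases eq_or_ne (ν.rnDeriv μ ω) 0 with h0 | h0
      · simp [h0]
      · have hRpos : 0 < R ω := ENNReal.toReal_pos h0 hlt.ne
        have : ν.rnDeriv μ ω = ENNReal.ofReal (R ω) := by
          rw [hR, ENNReal.ofReal_toReal hlt.ne]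
        rw [this, ← ENNReal.ofReal_mul ENNReal.toReal_nonneg]
        apply ENNReal.ofReal_le_ofReal
        apply le_of_eq
        show R ω * (f ω / (R ω * m)) = f ω / m
        field_simp
      -- R * (f/(R*m)) = f/m
    calc ∫⁻ ω, ν.rnDeriv μ ω * ENNReal.ofReal (g ω) ∂μ
        ≤ ∫⁻ ω, ENNReal.ofReal (f ω / m) ∂μ := lintegral_mono_ae hptwise
      _ = ENNReal.ofReal (∫ ω, f ω / m ∂μ) := by
          rw [← ofReal_integral_eq_lintegral_ofReal (hfInt.div_const m)
            (Filter.Eventually.of_forall fun ω => div_nonneg (le_trans hδ.le (hbd ω).1) hm0.le)]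
      _ = ENNReal.ofReal 1 := by rw [integral_div, ← hm, div_self hm0.ne']
  obtain ⟨hgInt, hgle⟩ := aux_integrable_and_le hgmeas hg0 zero_le_one hlint
  -- pointwise key inequality, a.e. ν
  have hkey : ∀ᵐ ω ∂ν, Real.log (f ω) ≤
      Real.log (R ω) + Real.log m + (g ω - 1) := by
    filter_upwards [Measure.rnDeriv_pos hac, hac.ae_le (Measure.rnDeriv_lt_top ν μ)]
      with ω h0 hlt
    have hRpos : 0 < R ω := ENNReal.toReal_pos h0.ne' hlt.ne
    have hfpos : 0 < f ω := lt_of_lt_of_le hδ (hbd ω).1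
    have hgpos : 0 < g ω := div_pos hfpos (mul_pos hRpos hm0)
    have hlog : Real.log (g ω) ≤ g ω - 1 := Real.log_le_sub_one_of_pos hgpos
    have : Real.log (g ω) = Real.log (f ω) - (Real.log (R ω) + Real.log m) := by
      rw [hg, Real.log_div hfpos.ne' (mul_pos hRpos hm0).ne',
        Real.log_mul hRpos.ne' hm0.ne']
    linarith [this ▸ hlog]
  -- integrate
  have hlogf : Integrable (fun ω => Real.log (f ω)) ν := by
    apply aux_integrable_of_bdd (hf.log)
    intro ω
    have h1 : Real.log δ ≤ Real.log (f ω) :=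
      Real.log_le_log hδ (hbd ω).1
    have h2 : Real.log (f ω) ≤ Real.log K :=
      Real.log_le_log (lt_of_lt_of_le hδ (hbd ω).1) (hbd ω).2
    exact abs_le_max_abs_abs h1 h2
  have hRHSInt : Integrable (fun ω => Real.log (R ω) + Real.log m + (g ω - 1)) ν :=
    (hint.add (integrable_const _)).add (hgInt.sub (integrable_const 1))
  have hmono := integral_mono_ae hlogf hRHSInt hkey
  have hEq : ∫ ω, (Real.log (R ω) + Real.log m + (g ω - 1)) ∂ν =
      (∫ ω, Real.log (R ω) ∂ν) + Real.log m + ((∫ ω, g ω ∂ν) - 1) := by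
    have h1 : Integrable (fun ω => Real.log (R ω) + Real.log m) ν :=
      hint.add (integrable_const _)
    have h2 : Integrable (fun ω => g ω - 1) ν := hgInt.sub (integrable_const 1)
    rw [integral_add h1 h2, integral_add hint (integrable_const (Real.log m)),
      integral_sub hgInt (integrable_const 1), integral_const, integral_const]
    simp [measure_univ]
    rfl
  rw [hEq] at hmono
  linarith

end Fwd

section Rev
variable {Ω : Type*} [MeasurableSpace Ω] {μ ν : Measure Ω}
  [IsProbabilityMeasure μ] [IsProbabilityMeasure ν] {C : ℝ}

lemma aux_ac (hC : 0 ≤ C)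
    (h : ∀ f : Ω → ℝ, Measurable f →
        (∃ δ K : ℝ, 0 < δ ∧ δ ≤ K ∧ ∀ ω, δ ≤ f ω ∧ f ω ≤ K) →
        ∫ ω, Real.log (f ω) ∂ν ≤ Real.log (∫ ω, f ω ∂μ) + C) :
    ν ≪ μ := by
  by_contra hac
  have hex : ¬ ∀ s, μ s = 0 → ν s = 0 := fun H =>
    hac (Measure.AbsolutelyContinuous.mk (fun s _ h0 => H s h0))
  push_neg at hex
  obtain ⟨s, hs0, hsne⟩ := hex
  set t := toMeasurable μ s with ht
  have htm : MeasurableSet t := measurableSet_toMeasurable μ s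
  have ht0 : μ t = 0 := by rwa [ht, measure_toMeasurable]
  have htν : ν t ≠ 0 := fun h0 => hsne (measure_mono_null (subset_toMeasurable μ s) h0)
  set c : ℝ := (ν t).toReal with hc
  have hcpos : 0 < c := ENNReal.toReal_pos htν (measure_ne_top ν t)
  set K : ℝ := Real.exp ((C + 1) / c) with hKdef
  have hK1 : 1 ≤ K := Real.one_le_exp (by positivity)
  set f : Ω → ℝ := fun ω => if ω ∈ t then K else 1 with hfdef
  have hfm : Measurable f := Measurable.ite htm measurable_const measurable_const
  have hb : ∃ δ K' : ℝ, 0 < δ ∧ δ ≤ K' ∧ ∀ ω, δ ≤ f ω ∧ f ω ≤ K' :=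
    ⟨1, K, one_pos, hK1, fun ω => by by_cases hω : ω ∈ t <;> simp [hfdef, hω, hK1]⟩
  have hμf : ∫ ω, f ω ∂μ = 1 := by
    have hae : f =ᵐ[μ] fun _ => 1 := by
      filter_upwards [measure_eq_zero_iff_ae_notMem.mp ht0] with ω hω
      simp [hfdef, hω]
    rw [integral_congr_ae hae]
    simp
  have hνlog : ∫ ω, Real.log (f ω) ∂ν = c * Real.log K := by
    have heq : (fun ω => Real.log (f ω)) = t.indicator (fun _ => Real.log K) := by
      funext ω
      by_cases hω : ω ∈ t <;> simp [hfdef, hω, Set.indicator]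
    rw [heq, integral_indicator_const _ htm]
    simp [hc, smul_eq_mul, Measure.real]
  have hmain := h f hfm hb
  rw [hνlog, hμf] at hmain
  simp only [Real.log_one, zero_add] at hmain
  have : c * Real.log K = C + 1 := by
    rw [hKdef, Real.log_exp]
    field_simp
  linarith

end Rev

section Rev2
variable {Ω : Type*} [MeasurableSpace Ω] {μ ν : Measure Ω}
  [IsProbabilityMeasure μ] [IsProbabilityMeasure ν] {C : ℝ}

lemma aux_reverse (hC : 0 ≤ C) (hac : ν ≪ μ)
    (h : ∀ f : Ω → ℝ, Measurable f →
        (∃ δ K : ℝ, 0 < δ ∧ δ ≤ K ∧ ∀ ω, δ ≤ f ω ∧ f ω ≤ K) →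
        ∫ ω, Real.log (f ω) ∂ν ≤ Real.log (∫ ω, f ω ∂μ) + C) :
    Integrable (fun ω => Real.log (ν.rnDeriv μ ω).toReal) ν ∧
      ∫ ω, Real.log (ν.rnDeriv μ ω).toReal ∂ν ≤ C := by
  set R : Ω → ℝ := fun ω => (ν.rnDeriv μ ω).toReal with hRdef
  set L : Ω → ℝ := fun ω => Real.log (R ω) with hLdef
  have hRmeas : Measurable R := (Measure.measurable_rnDeriv ν μ).ennreal_toReal
  have hLmeas : Measurable L := hRmeas.log
  have hR0 : ∀ ω, 0 ≤ R ω := fun ω => ENNReal.toReal_nonneg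
  -- the truncations
  set fN : ℕ → Ω → ℝ := fun n ω => max (min (R ω) ((n : ℝ) + 1)) (((n : ℝ) + 1)⁻¹)
    with hfNdef
  have hb1 : ∀ n : ℕ, (1 : ℝ) ≤ (n : ℝ) + 1 := fun n => by
    have : (0:ℝ) ≤ (n:ℝ) := Nat.cast_nonneg n
    linarith
  have hbpos : ∀ n : ℕ, (0 : ℝ) < (n : ℝ) + 1 := fun n => lt_of_lt_of_le one_pos (hb1 n)
  have hinvle : ∀ n : ℕ, (((n : ℝ) + 1)⁻¹) ≤ 1 := fun n => inv_le_one_of_one_le₀ (hb1 n)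
  have hinvpos : ∀ n : ℕ, (0:ℝ) < ((n : ℝ) + 1)⁻¹ := fun n => inv_pos.mpr (hbpos n)
  have hfNm : ∀ n, Measurable (fN n) := fun n =>
    (hRmeas.min measurable_const).max measurable_const
  have hfNbd : ∀ (n : ℕ) ω, ((n : ℝ) + 1)⁻¹ ≤ fN n ω ∧ fN n ω ≤ (n : ℝ) + 1 := fun n ω =>
    ⟨le_max_right _ _, max_le (min_le_right _ _) (le_trans (hinvle n) (hb1 n))⟩
  have hfNpos : ∀ (n : ℕ) ω, 0 < fN n ω := fun n ω =>
    lt_of_lt_of_le (hinvpos n) (hfNbd n ω).1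
  -- sandwich lemma
  have hsand : ∀ (n : ℕ) ω, 0 < R ω →
      min (L ω) 0 ≤ Real.log (fN n ω) ∧ Real.log (fN n ω) ≤ max (L ω) 0 := by
    intro n ω hRpos
    constructor
    · have hlow : min (R ω) 1 ≤ fN n ω :=
        le_trans (min_le_min (le_refl _) (hb1 n)) (le_max_left _ _)
      have hminpos : 0 < min (R ω) 1 := lt_min hRpos one_pos
      have : Real.log (min (R ω) 1) ≤ Real.log (fN n ω) := Real.log_le_log hminpos hlow
      refine le_trans (le_of_eq ?_) this
      rcases le_total (R ω) 1 with hc | hc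
      · rw [min_eq_left hc, min_eq_left (Real.log_nonpos (hR0 ω) hc)]
      · rw [min_eq_right hc, min_eq_right (Real.log_nonneg hc), Real.log_one]
    · have hup : fN n ω ≤ max (R ω) 1 :=
        max_le (le_trans (min_le_left _ _) (le_max_left _ _))
          (le_trans (hinvle n) (le_max_right _ _))
      have : Real.log (fN n ω) ≤ Real.log (max (R ω) 1) :=
        Real.log_le_log (hfNpos n ω) hup
      refine le_trans this (le_of_eq ?_)
      rcases le_total (R ω) 1 with hc | hc
      · rw [max_eq_right hc, Real.log_one, max_eq_right (Real.log_nonpos (hR0 ω) hc)]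
      · rw [max_eq_left hc, max_eq_left (Real.log_nonneg hc)]
  have habs : ∀ (n : ℕ) ω, 0 < R ω → |Real.log (fN n ω)| ≤ |L ω| := by
    intro n ω hRpos
    obtain ⟨h1, h2⟩ := hsand n ω hRpos
    refine abs_le.mpr ⟨le_trans (le_min (neg_abs_le _) (neg_nonpos.mpr (abs_nonneg _))) h1,
      le_trans h2 (max_le (le_abs_self _) (abs_nonneg _))⟩
  -- integrability of each log (fN n)
  have hlogfN : ∀ n, Integrable (fun ω => Real.log (fN n ω)) ν := by
    intro n
    apply aux_integrable_of_bdd (hfNm n).log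
    intro ω
    exact abs_le_max_abs_abs
      (Real.log_le_log (hinvpos n) (hfNbd n ω).1)
      (Real.log_le_log (hfNpos n ω) (hfNbd n ω).2)
  -- the main inequality from h
  have hAn : ∀ n, ∫ ω, Real.log (fN n ω) ∂ν ≤ ((n : ℝ) + 1)⁻¹ + C := by
    intro n
    have hfNInt : Integrable (fN n) μ := by
      apply aux_integrable_of_bdd (hfNm n)
      intro ω
      exact abs_le.mpr ⟨le_trans (by linarith [hinvpos n, hbpos n]) (hfNbd n ω).1, (hfNbd n ω).2⟩
    have hRInt : Integrable R μ := Measure.integrable_toReal_rnDeriv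
    have hμR : ∫ ω, R ω ∂μ = 1 := by
      rw [hRdef, Measure.integral_toReal_rnDeriv hac]
      simp
    have hup : ∫ ω, fN n ω ∂μ ≤ 1 + ((n : ℝ) + 1)⁻¹ := by
      have hpt : ∀ ω, fN n ω ≤ R ω + ((n : ℝ) + 1)⁻¹ := fun ω =>
        max_le (le_trans (min_le_left _ _) (by linarith [hinvpos n]))
          (by linarith [hR0 ω])
      calc ∫ ω, fN n ω ∂μ ≤ ∫ ω, (R ω + ((n : ℝ) + 1)⁻¹) ∂μ :=
            integral_mono hfNInt (hRInt.add (integrable_const _)) hpt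
        _ = 1 + ((n : ℝ) + 1)⁻¹ := by
            rw [integral_add hRInt (integrable_const _), hμR, integral_const]
            simp
    have hlo : (((n : ℝ) + 1)⁻¹ : ℝ) ≤ ∫ ω, fN n ω ∂μ := by
      have := integral_mono (integrable_const (((n : ℝ) + 1)⁻¹)) hfNInt
        (fun ω => (hfNbd n ω).1)
      simpa using this
    have hpos : 0 < ∫ ω, fN n ω ∂μ := lt_of_lt_of_le (hinvpos n) hlo
    have hlog1 : Real.log (∫ ω, fN n ω ∂μ) ≤ Real.log (1 + ((n : ℝ) + 1)⁻¹) :=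
      Real.log_le_log hpos hup
    have hlog2 : Real.log (1 + ((n : ℝ) + 1)⁻¹) ≤ ((n : ℝ) + 1)⁻¹ := by
      have := Real.log_le_sub_one_of_pos (show (0:ℝ) < 1 + ((n : ℝ) + 1)⁻¹ by
        linarith [hinvpos n])
      linarith
    have := h (fN n) (hfNm n) ⟨((n : ℝ) + 1)⁻¹, (n : ℝ) + 1, hinvpos n,
      le_trans (hinvle n) (hb1 n), hfNbd n⟩
    linarith
  -- a.e. positivity of R under ν
  have hae : ∀ᵐ ω ∂ν, 0 < R ω := by
    filter_upwards [Measure.rnDeriv_pos hac, hac.ae_le (Measure.rnDeriv_lt_top ν μ)]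
      with ω h0 hlt
    exact ENNReal.toReal_pos h0.ne' hlt.ne
  -- negative part of L is integrable with integral ≤ 1
  set Nf : Ω → ℝ := fun ω => max (-(L ω)) 0 with hNdef
  have hNmeas : Measurable Nf := hLmeas.neg.max measurable_const
  have hN0 : ∀ ω, 0 ≤ Nf ω := fun ω => le_max_right _ _
  have hNlint : ∫⁻ ω, ENNReal.ofReal (Nf ω) ∂ν ≤ ENNReal.ofReal 1 := by
    have hch := MeasureTheory.lintegral_rnDeriv_mul hac
      (f := fun ω => ENNReal.ofReal (Nf ω))
      (ENNReal.measurable_ofReal.comp hNmeas).aemeasurable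
    rw [← hch]
    have hptwise : ∀ᵐ ω ∂μ,
        ν.rnDeriv μ ω * ENNReal.ofReal (Nf ω) ≤ ENNReal.ofReal 1 := by
      filter_upwards [Measure.rnDeriv_lt_top ν μ] with ω hlt
      rcases eq_or_ne (ν.rnDeriv μ ω) 0 with h0 | h0
      · simp [h0]
      · have hRpos : 0 < R ω := ENNReal.toReal_pos h0 hlt.ne
        have heq : ν.rnDeriv μ ω = ENNReal.ofReal (R ω) := by
          rw [hRdef, ENNReal.ofReal_toReal hlt.ne]
        rw [heq, ← ENNReal.ofReal_mul ENNReal.toReal_nonneg]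
        apply ENNReal.ofReal_le_ofReal
        show R ω * max (-(L ω)) 0 ≤ 1
        rcases le_total 1 (R ω) with hc | hc
        · have : -(L ω) ≤ 0 := neg_nonpos.mpr (Real.log_nonneg hc)
          rw [max_eq_right this]
          simp
        · have hinv : 0 < (R ω)⁻¹ := inv_pos.mpr hRpos
          have h1 : -(L ω) ≤ (R ω)⁻¹ - 1 := by
            have := Real.log_le_sub_one_of_pos hinv
            rw [Real.log_inv] at this
            simpa [hLdef] using this
          have h2 : max (-(L ω)) 0 ≤ (R ω)⁻¹ - 1 := by
            apply max_le h1
            have : (1:ℝ) ≤ (R ω)⁻¹ := (one_le_inv₀ hRpos).mpr hc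
            linarith
          have h3 : R ω * max (-(L ω)) 0 ≤ R ω * ((R ω)⁻¹ - 1) :=
            mul_le_mul_of_nonneg_left h2 (hR0 ω)
          have h4 : R ω * ((R ω)⁻¹ - 1) = 1 - R ω := by
            field_simp
          nlinarith [hR0 ω]
    calc ∫⁻ ω, ν.rnDeriv μ ω * ENNReal.ofReal (Nf ω) ∂μ
        ≤ ∫⁻ _, ENNReal.ofReal 1 ∂μ := lintegral_mono_ae hptwise
      _ = ENNReal.ofReal 1 := by simp
  obtain ⟨hNint, hNle⟩ := aux_integrable_and_le hNmeas hN0 zero_le_one hNlint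
  -- positive parts of log (fN n): bounded integrals
  have hPn_bound : ∀ n, ∫ ω, max (Real.log (fN n ω)) 0 ∂ν ≤ C + 2 := by
    intro n
    have heq : ∀ ω, max (Real.log (fN n ω)) 0 =
        Real.log (fN n ω) + max (-(Real.log (fN n ω))) 0 := by
      intro ω
      rcases le_total (Real.log (fN n ω)) 0 with hc | hc
      · rw [max_eq_right hc, max_eq_left (by linarith)]; ring
      · rw [max_eq_left hc, max_eq_right (by linarith)]; ring
    have hnegle : ∫ ω, max (-(Real.log (fN n ω))) 0 ∂ν ≤ ∫ ω, Nf ω ∂ν := by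
      apply integral_mono_ae (hlogfN n).neg.pos_part hNint
      filter_upwards [hae] with ω hRpos
      have h1 : -(Real.log (fN n ω)) ≤ -(min (L ω) 0) := neg_le_neg (hsand n ω hRpos).1
      have h2 : -(min (L ω) 0) ≤ max (-(L ω)) 0 := by
        rcases le_total (L ω) 0 with hc | hc
        · rw [min_eq_left hc]; exact le_max_left _ _
        · rw [min_eq_right hc, neg_zero]; exact le_max_right _ _
      exact max_le (le_trans h1 h2) (hN0 ω)
    calc ∫ ω, max (Real.log (fN n ω)) 0 ∂ν
        = ∫ ω, (Real.log (fN n ω) + max (-(Real.log (fN n ω))) 0) ∂ν := by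
          exact integral_congr_ae (Filter.Eventually.of_forall fun ω => heq ω)
      _ = (∫ ω, Real.log (fN n ω) ∂ν) + ∫ ω, max (-(Real.log (fN n ω))) 0 ∂ν :=
          integral_add (hlogfN n) (hlogfN n).neg.pos_part
      _ ≤ (((n : ℝ) + 1)⁻¹ + C) + 1 := add_le_add (hAn n) (le_trans hnegle hNle)
      _ ≤ C + 2 := by linarith [hinvle n]
  -- positive part of L
  set P : Ω → ℝ := fun ω => max (L ω) 0 with hPdef
  have hPmeas : Measurable P := hLmeas.max measurable_const
  have hP0 : ∀ ω, 0 ≤ P ω := fun ω => le_max_right _ _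
  have hPn_eq : ∀ (n : ℕ) ω, max (Real.log (fN n ω)) 0
      = min (P ω) (Real.log ((n:ℝ)+1)) := by
    intro n ω
    show max (Real.log (fN n ω)) 0 = min (max (L ω) 0) (Real.log ((n:ℝ)+1))
    rcases le_total (R ω) 1 with hc | hc
    · have hL0 : L ω ≤ 0 := Real.log_nonpos (hR0 ω) hc
      have hfle : fN n ω ≤ 1 := max_le (le_trans (min_le_left _ _) hc) (hinvle n)
      have hlogle : Real.log (fN n ω) ≤ 0 := Real.log_nonpos (le_of_lt (hfNpos n ω)) hfle
      rw [max_eq_right hlogle, max_eq_right hL0,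
        min_eq_left (Real.log_nonneg (hb1 n))]
    · have hL0 : 0 ≤ L ω := Real.log_nonneg hc
      have hRpos : 0 < R ω := lt_of_lt_of_le one_pos hc
      rcases le_total (R ω) ((n:ℝ)+1) with h2 | h2
      · have hfeq : fN n ω = R ω := by
          show max (min (R ω) ((n:ℝ)+1)) (((n:ℝ)+1)⁻¹) = R ω
          rw [min_eq_left h2, max_eq_left (le_trans (hinvle n) hc)]
        rw [hfeq]
        show max (L ω) 0 = min (max (L ω) 0) (Real.log ((n:ℝ)+1))
        rw [max_eq_left hL0, min_eq_left (Real.log_le_log hRpos h2)]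
      · have hfeq : fN n ω = (n:ℝ)+1 := by
          show max (min (R ω) ((n:ℝ)+1)) (((n:ℝ)+1)⁻¹) = (n:ℝ)+1
          rw [min_eq_right h2, max_eq_left (le_trans (hinvle n) (hb1 n))]
        rw [hfeq, max_eq_left (Real.log_nonneg (hb1 n)), max_eq_left hL0,
          min_eq_right (Real.log_le_log (hbpos n) h2)]
  -- lintegral bound for P via monotone convergence
  have hPlint : ∫⁻ ω, ENNReal.ofReal (P ω) ∂ν ≤ ENNReal.ofReal (C + 2) := by
    have hmono : ∀ ω, Monotone
        (fun n : ℕ => ENNReal.ofReal (min (P ω) (Real.log ((n:ℝ)+1)))) := by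
      intro ω a b hab
      apply ENNReal.ofReal_le_ofReal
      refine min_le_min (le_refl _) (Real.log_le_log (hbpos a) ?_)
      have := (Nat.cast_le (α := ℝ)).mpr hab
      linarith
    have htend : ∀ ω, Tendsto
        (fun n : ℕ => ENNReal.ofReal (min (P ω) (Real.log ((n:ℝ)+1)))) atTop
        (𝓝 (ENNReal.ofReal (P ω))) := by
      intro ω
      apply ENNReal.tendsto_ofReal
      obtain ⟨N, hN⟩ := exists_nat_ge (Real.exp (P ω))
      have hev : ∀ᶠ n : ℕ in atTop, min (P ω) (Real.log ((n:ℝ)+1)) = P ω := by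
        filter_upwards [eventually_ge_atTop N] with n hn
        apply min_eq_left
        have hcast : (N:ℝ) ≤ (n:ℝ) := Nat.cast_le.mpr hn
        have h1 : Real.exp (P ω) ≤ (n:ℝ)+1 := by linarith
        have := Real.log_le_log (Real.exp_pos _) h1
        rwa [Real.log_exp] at this
      have hev' : (fun n : ℕ => min (P ω) (Real.log ((n:ℝ)+1))) =ᶠ[atTop]
          fun _ => P ω := hev
      exact tendsto_const_nhds.congr' hev'.symm
    have hlim := lintegral_tendsto_of_tendsto_of_monotone (μ := ν)
      (f := fun (n : ℕ) ω => ENNReal.ofReal (min (P ω) (Real.log ((n:ℝ)+1))))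
      (F := fun ω => ENNReal.ofReal (P ω))
      (fun n => ((hPmeas.min measurable_const).ennreal_ofReal).aemeasurable)
      (Filter.Eventually.of_forall hmono) (Filter.Eventually.of_forall htend)
    refine le_of_tendsto hlim (Filter.Eventually.of_forall fun n => ?_)
    have hintn : Integrable (fun ω => min (P ω) (Real.log ((n:ℝ)+1))) ν :=
      ((hlogfN n).pos_part).congr
        (Filter.Eventually.of_forall fun ω => hPn_eq n ω)
    have hnn : (0:Ω → ℝ) ≤ᵐ[ν] fun ω => min (P ω) (Real.log ((n:ℝ)+1)) :=
      Filter.Eventually.of_forall fun ω =>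
        le_min (hP0 ω) (Real.log_nonneg (hb1 n))
    rw [← ofReal_integral_eq_lintegral_ofReal hintn hnn]
    apply ENNReal.ofReal_le_ofReal
    calc ∫ ω, min (P ω) (Real.log ((n:ℝ)+1)) ∂ν
        = ∫ ω, max (Real.log (fN n ω)) 0 ∂ν :=
          integral_congr_ae (Filter.Eventually.of_forall fun ω => (hPn_eq n ω).symm)
      _ ≤ C + 2 := hPn_bound n
  have hPint : Integrable P ν := by
    refine ⟨hPmeas.aestronglyMeasurable, ?_⟩
    rw [hasFiniteIntegral_iff_ofReal (Filter.Eventually.of_forall hP0)]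
    exact lt_of_le_of_lt hPlint ENNReal.ofReal_lt_top
  have hLint : Integrable L ν := by
    have heq : (fun ω => P ω - Nf ω) = L := by
      funext ω
      exact max_zero_sub_eq_self (L ω)
    exact heq ▸ (hPint.sub hNint)
  refine ⟨hLint, ?_⟩
  -- dominated convergence
  have hdom := tendsto_integral_of_dominated_convergence (μ := ν)
    (F := fun (n : ℕ) ω => Real.log (fN n ω)) (f := L) (fun ω => |L ω|)
    (fun n => ((hfNm n).log).aestronglyMeasurable) hLint.abs
    (fun n => by
      filter_upwards [hae] with ω hR
      simpa [Real.norm_eq_abs] using habs n ω hR)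
    (by
      filter_upwards [hae] with ω hR
      obtain ⟨N, hN⟩ := exists_nat_ge (max (R ω) (R ω)⁻¹)
      have hev : ∀ᶠ n : ℕ in atTop, Real.log (fN n ω) = L ω := by
        filter_upwards [eventually_ge_atTop N] with n hn
        have hcast : (N:ℝ) ≤ (n:ℝ) := Nat.cast_le.mpr hn
        have h1 : R ω ≤ (n:ℝ)+1 := by
          have := le_max_left (R ω) (R ω)⁻¹; linarith
        have h2 : ((n:ℝ)+1)⁻¹ ≤ R ω := by
          have hinvR : (R ω)⁻¹ ≤ (n:ℝ)+1 := by
            have := le_max_right (R ω) (R ω)⁻¹; linarith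
          have := inv_anti₀ (inv_pos.mpr hR) hinvR
          rwa [inv_inv] at this
        have hfeq : fN n ω = R ω := by
          show max (min (R ω) ((n:ℝ)+1)) (((n:ℝ)+1)⁻¹) = R ω
          rw [min_eq_left h1, max_eq_left h2]
        rw [hfeq]
      have hev' : (fun n : ℕ => Real.log (fN n ω)) =ᶠ[atTop] fun _ => L ω := hev
      exact tendsto_const_nhds.congr' hev'.symm)
  have hCseq : Tendsto (fun n : ℕ => ((n:ℝ)+1)⁻¹ + C) atTop (𝓝 (0 + C)) :=
    Tendsto.add (by simpa [one_div] using (tendsto_one_div_add_atTop_nhds_zero_nat : Tendsto (fun n : ℕ => 1 / ((n : ℝ) + 1)) atTop (𝓝 0)))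
      tendsto_const_nhds
  rw [zero_add] at hCseq
  exact le_of_tendsto_of_tendsto' hdom hCseq hAn

end Rev2


/-- for probability measures `μ, ν` and `C ≥ 0`, one has `Ent(ν|μ) ≤ C`
if and only if, for every measurable `f` bounded above and bounded below by a positive
constant, `∫ log f dν ≤ log (∫ f dμ) + C`. -/
theorem stmt_11 {Ω : Type*} [MeasurableSpace Ω] (μ ν : Measure Ω)
    [IsProbabilityMeasure μ] [IsProbabilityMeasure ν] (C : ℝ) (hC : 0 ≤ C) :
    relEnt ν μ ≤ ENNReal.ofReal C ↔
      ∀ f : Ω → ℝ, Measurable f →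
        (∃ δ K : ℝ, 0 < δ ∧ δ ≤ K ∧ ∀ ω, δ ≤ f ω ∧ f ω ≤ K) →
        ∫ ω, Real.log (f ω) ∂ν ≤ Real.log (∫ ω, f ω ∂μ) + C := by
  constructor
  · intro h f hf hb
    rw [relEnt] at h
    by_cases hcond : ν ≪ μ ∧ Integrable (fun ω => Real.log (ν.rnDeriv μ ω).toReal) ν
    · rw [if_pos hcond] at h
      exact aux_forward hcond.1 hcond.2 ((ENNReal.ofReal_le_ofReal_iff hC).mp h) f hf hb
    · rw [if_neg hcond] at h
      exact absurd (top_le_iff.mp h) ENNReal.ofReal_ne_top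
  · intro h
    have hac : ν ≪ μ := aux_ac hC h
    obtain ⟨hLint, hLle⟩ := aux_reverse hC hac h
    rw [relEnt, if_pos ⟨hac, hLint⟩]
    exact ENNReal.ofReal_le_ofReal hLle
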